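/- arXiv:1810.11790 — 2 statements merged into one kernel-verified Lean document; each statement's English description precedes it below -/
import Mathlib

section
/- Let μ satisfy the one-sided Lipschitz condition with constant c, let h > 0 with c·h < 1/2, and define μ_h(x) = μ(F_h(x)) where F_h(x) is the unique solution of y = x + h·μ(y). Then μ_h is one-sided Lipschitz: ⟨x − x', μ_h(x) − μ_h(x')⟩ ≤ c(1 − c·h)^{-1} |x − x'|² for all x, x'. -/
theorem ssbe_perturbed_drift_one_sided_lipschitz (d : ℕ)
    (μ : EuclideanSpace ℝ (Fin d) → EuclideanSpace ℝ (Fin d)) (c : ℝ)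
    (hμ : ∀ x y : EuclideanSpace ℝ (Fin d),
      inner ℝ (x - y) (μ x - μ y) ≤ c * ‖x - y‖ ^ 2)
    (h : ℝ) (hh : 0 < h) (hch : c * h < 1 / 2)
    (F : EuclideanSpace ℝ (Fin d) → EuclideanSpace ℝ (Fin d))
    (hF : ∀ x, F x = x + h • μ (F x)) :
    ∀ x x' : EuclideanSpace ℝ (Fin d),
      inner ℝ (x - x') (μ (F x) - μ (F x')) ≤ c * (1 - c * h)⁻¹ * ‖x - x'‖ ^ 2 := by
  intro x x'
  set u := F x - F x' with hu
  set v := μ (F x) - μ (F x') with hv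
  have hx1 : x = F x - h • μ (F x) := by
    rw [eq_sub_iff_add_eq]; exact (hF x).symm
  have hx2 : x' = F x' - h • μ (F x') := by
    rw [eq_sub_iff_add_eq]; exact (hF x').symm
  have hx : x - x' = u - h • v := by
    rw [hx1, hx2, hu, hv, smul_sub]; abel
  set b : ℝ := inner ℝ u v with hbdef
  set a : ℝ := ‖u‖ ^ 2 with hadef
  set e : ℝ := ‖v‖ ^ 2 with hedef
  have hb : (inner ℝ (x - x') v : ℝ) = b - h * e := by
    rw [hx, inner_sub_left, real_inner_smul_left, real_inner_self_eq_norm_sq]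
  have hn : ‖x - x'‖ ^ 2 = a - 2 * (h * b) + h ^ 2 * e := by
    rw [hx, @norm_sub_sq_real, real_inner_smul_right, norm_smul, Real.norm_eq_abs,
      mul_pow, sq_abs]
  have hcs : b * b ≤ a * e := by
    have h1 := abs_real_inner_le_norm u v
    have h2 : b * b = |b| * |b| := (abs_mul_abs_self b).symm
    rw [hadef, hedef]
    nlinarith [abs_nonneg (inner ℝ u v : ℝ), norm_nonneg u, norm_nonneg v]
  have hol : b ≤ c * a := hμ (F x) (F x')
  have ha : 0 ≤ a := hadef ▸ sq_nonneg _
  have he : 0 ≤ e := hedef ▸ sq_nonneg _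
  have hk : 0 < 1 - c * h := by linarith
  rw [hb, hn, show c * (1 - c * h)⁻¹ * (a - 2 * (h * b) + h ^ 2 * e)
      = c * (a - 2 * (h * b) + h ^ 2 * e) / (1 - c * h) by ring, le_div_iff₀ hk]
  clear_value b a e
  clear hμ hF hx1 hx2 hx hb hn hu hv hbdef hadef hedef
  have h1 : h * b ≤ c * h * a := by nlinarith
  have h2 : c * h * a ≤ (1 / 2) * a := by nlinarith
  have hfac : 0 ≤ (a - h * b) * (c * a - b) :=
    mul_nonneg (by linarith) (by linarith)
  rcases ha.eq_or_lt with ha0 | ha0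
  · have hb0 : b = 0 := by nlinarith
    nlinarith [mul_nonneg hh.le he]
  · nlinarith [hfac, mul_nonneg hh.le (by nlinarith : (0:ℝ) ≤ a * e - b * b)]
end

section
/- Fix ε > 0, L ∈ ℕ, step sizes h_l > 0 and variances V_l > 0 for l = 0, …, L. Among all positive real choices of (M_l) subject to the constraint Σ_{l=0}^{L} V_l / M_l ≤ ε²/2, the computational cost Σ_{l=0}^{L} M_l / h_l is minimized by M_l = 2 ε^{−2} √(V_l h_l) · Σ_{i=0}^{L} √(V_i / h_i), and the minimal cost equals 2 ε^{−2} (Σ_{i=0}^{L} √(V_i / h_i))². -/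
private lemma mlmc_aux1 (ε S v b a : ℝ) (hε : 0 < ε) (hS : 0 < S)
    (hb : 0 < b) (hp : a * b = v) :
    v / (2 * (ε^2)⁻¹ * b * S) = a * (ε ^ 2 / (2 * S)) := by
  rw [div_eq_iff (by positivity)]
  field_simp
  linear_combination (-1) * hp

private lemma mlmc_aux2 (ε S hl b a : ℝ) (h2 : 0 < hl) (hp : a * hl = b) :
    2 * (ε^2)⁻¹ * b * S / hl = 2 * (ε^2)⁻¹ * S * a := by
  rw [div_eq_iff h2.ne']
  linear_combination (-2 * (ε^2)⁻¹ * S) * hp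

open Finset in
theorem mlmc_optimal_paths (ε : ℝ) (hε : 0 < ε) (L : ℕ)
    (h V : Fin (L + 1) → ℝ) (hh : ∀ l, 0 < h l) (hV : ∀ l, 0 < V l)
    (Mopt : Fin (L + 1) → ℝ)
    (hMopt : ∀ l, Mopt l =
      2 * ε ^ (-2 : ℤ) * Real.sqrt (V l * h l) * ∑ i, Real.sqrt (V i / h i)) :
    (∑ l, V l / Mopt l ≤ ε ^ 2 / 2) ∧
    (∀ M : Fin (L + 1) → ℝ, (∀ l, 0 < M l) → ∑ l, V l / M l ≤ ε ^ 2 / 2 →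
      ∑ l, Mopt l / h l ≤ ∑ l, M l / h l) ∧
    (∑ l, Mopt l / h l = 2 * ε ^ (-2 : ℤ) * (∑ i, Real.sqrt (V i / h i)) ^ 2) := by
  have hε2 : (0:ℝ) < ε ^ 2 := by positivity
  have hεz : ε ^ (-2 : ℤ) = (ε ^ 2)⁻¹ := by rw [zpow_neg, zpow_two, sq]
  set S := ∑ i, Real.sqrt (V i / h i) with hSdef
  have hSpos : 0 < S := by
    refine Finset.sum_pos (fun i _ => Real.sqrt_pos.2 ?_) ⟨0, Finset.mem_univ 0⟩
    have := hV i; have := hh i; positivity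
  have hprod : ∀ l, Real.sqrt (V l / h l) * Real.sqrt (V l * h l) = V l := by
    intro l
    have h1 := hV l; have h2 := hh l
    rw [← Real.sqrt_mul (by positivity)]
    rw [show V l / h l * (V l * h l) = (V l) ^ 2 by field_simp]
    exact Real.sqrt_sq h1.le
  have hprod2 : ∀ l, Real.sqrt (V l / h l) * h l = Real.sqrt (V l * h l) := by
    intro l
    have h1 := hV l; have h2 := hh l
    rw [show V l * h l = V l / h l * h l ^ 2 by rw [div_mul_eq_mul_div, eq_div_iff h2.ne']; ring,
      Real.sqrt_mul (by positivity), Real.sqrt_sq h2.le]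
  have hsqrtpos : ∀ l, 0 < Real.sqrt (V l * h l) := by
    intro l; have := hV l; have := hh l
    exact Real.sqrt_pos.2 (by positivity)
  have key1 : ∀ l : Fin (L+1), V l / Mopt l = Real.sqrt (V l / h l) * (ε ^ 2 / (2 * S)) := by
    intro l
    rw [hMopt l, hεz]
    exact mlmc_aux1 ε S (V l) _ _ hε hSpos (hsqrtpos l) (hprod l)
  have key3 : ∀ l : Fin (L+1), Mopt l / h l = 2 * (ε ^ 2)⁻¹ * S * Real.sqrt (V l / h l) := by
    intro l
    rw [hMopt l, hεz]
    exact mlmc_aux2 ε S (h l) _ _ (hh l) (hprod2 l)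
  have hsum1 : ∑ l, V l / Mopt l = ε ^ 2 / 2 := by
    simp_rw [key1]
    rw [← Finset.sum_mul, ← hSdef]
    field_simp
  have hsum3 : ∑ l, Mopt l / h l = 2 * ε ^ (-2 : ℤ) * S ^ 2 := by
    simp_rw [key3]
    rw [← Finset.mul_sum, ← hSdef, hεz]
    ring
  refine ⟨hsum1.le, ?_, hsum3⟩
  intro M hM hMc
  rw [hsum3, hεz]
  have hCS : S ^ 2 ≤ (∑ l, V l / M l) * ∑ l, M l / h l := by
    have hcs := Finset.sum_mul_sq_le_sq_mul_sq Finset.univ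
      (fun l => Real.sqrt (V l / M l)) (fun l => Real.sqrt (M l / h l))
    calc S ^ 2 = (∑ l, Real.sqrt (V l / M l) * Real.sqrt (M l / h l)) ^ 2 := by
          congr 1
          refine Finset.sum_congr rfl fun l _ => ?_
          have := hV l; have := hh l; have := hM l
          rw [← Real.sqrt_mul (by positivity)]
          congr 1
          field_simp
      _ ≤ (∑ l, Real.sqrt (V l / M l) ^ 2) * ∑ l, Real.sqrt (M l / h l) ^ 2 := hcs
      _ = (∑ l, V l / M l) * ∑ l, M l / h l := by
          congr 1 <;>
            exact Finset.sum_congr rfl fun l _ => Real.sq_sqrt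
              (by have := hV l; have := hh l; have := hM l; positivity)
  have hMh : 0 ≤ ∑ l, M l / h l :=
    Finset.sum_nonneg fun l _ => by have := hh l; have := hM l; positivity
  calc 2 * (ε ^ 2)⁻¹ * S ^ 2 ≤ 2 * (ε ^ 2)⁻¹ * ((ε ^ 2 / 2) * ∑ l, M l / h l) := by
        gcongr
        exact hCS.trans (by gcongr)
    _ = ∑ l, M l / h l := by field_simp
end
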